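/- Let A : ℝⁿ → ℝⁿ, C : ℝⁿ → ℝᵐ, T ≥ 1, and q ∈ ℕ. If there exists a nonzero z ∈ ℝⁿ with ∑_{k=0}^{T−1} |supp(C A^k z)| ≤ 2q, then there exist x₀ ≠ x₀' and error sequences e_k, e_k' with |supp(e_k)|, |supp(e_k')| ≤ q producing identical measurements y_k = C A^k x₀ + e_k = C A^k x₀' + e_k' for all k = 0,…,T−1; hence q errors are not correctable. -/

import Mathlib

/-- Converse of the correctability characterization: if some nonzero `z` has
`∑_{k<T} |supp(C Aᵏ z)| ≤ 2q`, then two distinct initial states admit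
`q`-sparse error sequences producing identical measurements. -/
theorem stmt16 {n m : ℕ} (A : (Fin n → ℝ) →ₗ[ℝ] (Fin n → ℝ))
    (C : (Fin n → ℝ) →ₗ[ℝ] (Fin m → ℝ)) (T q : ℕ) (hT : 1 ≤ T)
    (hz : ∃ z : Fin n → ℝ, z ≠ 0 ∧
      ∑ k ∈ Finset.range T, (Function.support (C ((A ^ k) z))).ncard ≤ 2 * q) :
    ∃ (x0 x0' : Fin n → ℝ) (e e' : ℕ → Fin m → ℝ),
      x0 ≠ x0' ∧
      (∀ k < T, (Function.support (e k)).ncard ≤ q) ∧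
      (∀ k < T, (Function.support (e' k)).ncard ≤ q) ∧
      (∀ k < T, C ((A ^ k) x0) + e k = C ((A ^ k) x0') + e' k) := by
  obtain ⟨z, hzne, hsum⟩ := hz
  set w : ℕ → Fin m → ℝ := fun k => C ((A ^ k) z) with hw
  classical
  set s : ℕ → Finset (Fin m) := fun k => Finset.univ.filter (fun i => w k i ≠ 0) with hs
  have hsupp : ∀ k, Function.support (w k) = ↑(s k) := by
    intro k
    ext i
    simp [hs, Function.support]
  have hscard : ∀ k, (Function.support (w k)).ncard = (s k).card := by
    intro k
    rw [hsupp k, Set.ncard_coe_finset]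
  -- per-k bound
  have hk2q : ∀ k < T, (s k).card ≤ 2 * q := by
    intro k hk
    have := Finset.single_le_sum (f := fun k => (Function.support (w k)).ncard)
      (fun i _ => Nat.zero_le _) (Finset.mem_range.mpr hk)
    rw [← hscard k]
    exact le_trans (by simpa using this) hsum
  -- choose splits
  have hch : ∀ k, ∃ t : Finset (Fin m), t ⊆ s k ∧ t.card = min q (s k).card := by
    intro k
    exact Finset.exists_subset_card_eq (min_le_right _ _)
  choose t ht hcard using hch
  refine ⟨0, z, fun k i => if i ∈ t k then w k i else 0,
    fun k i => if i ∈ t k then 0 else -(w k i), fun h => hzne h.symm, ?_, ?_, ?_⟩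
  · intro k hk
    have hsub : Function.support (fun i => if i ∈ t k then w k i else 0) ⊆ ↑(t k) := by
      intro i hi
      simp only [Function.mem_support] at hi
      by_cases hit : i ∈ t k
      · exact Finset.mem_coe.mpr hit
      · simp [hit] at hi
    calc (Function.support (fun i => if i ∈ t k then w k i else 0)).ncard
        ≤ (↑(t k) : Set (Fin m)).ncard := Set.ncard_le_ncard hsub (Set.toFinite _)
      _ = (t k).card := Set.ncard_coe_finset _
      _ ≤ q := by rw [hcard k]; exact min_le_left _ _
  · intro k hk
    have hsub : Function.support (fun i => if i ∈ t k then 0 else -(w k i))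
        ⊆ ↑(s k \ t k) := by
      intro i hi
      simp only [Function.mem_support] at hi
      by_cases hit : i ∈ t k
      · simp [hit] at hi
      · simp only [hit, if_false, ne_eq, neg_eq_zero] at hi
        simp [hs, hit, hi]
    have h2q := hk2q k hk
    calc (Function.support (fun i => if i ∈ t k then 0 else -(w k i))).ncard
        ≤ (↑(s k \ t k) : Set (Fin m)).ncard := Set.ncard_le_ncard hsub (Set.toFinite _)
      _ = (s k \ t k).card := Set.ncard_coe_finset _
      _ = (s k).card - (t k).card := Finset.card_sdiff_of_subset (ht k)
      _ ≤ q := by rw [hcard k]; omega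
  · intro k hk
    funext i
    have h0 : C ((A ^ k) (0 : Fin n → ℝ)) = 0 := by simp
    simp only [h0, Pi.add_apply, Pi.zero_apply, zero_add]
    by_cases hit : i ∈ t k
    · simp [hit, hw]
    · simp [hit, hw]
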